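/- Let R be a Noetherian ring, I an ideal of R, M an R-module in which every element is killed by a power of I, and g, g' ∈ R with g ≡ g' mod I. Then the localizations M_g and M_{g'} are isomorphic as R-modules; indeed g' acts invertibly on M_g and g acts invertibly on M_{g'}. -/

import Mathlib

/-!
STATEMENT 19.  `R` Noetherian, `I` an ideal, `M` an `R`-module in which every
element is killed by a power of `I`, and `g ≡ g' mod I`.  Then `g'` acts
invertibly (bijectively) on `M_g`, `g` acts invertibly on `M_{g'}`, and
`M_g ≅ M_{g'}` as `R`-modules.
-/

universe u v

/-- If `g` acts bijectively on `N` and `i` acts locally nilpotently, then `g - i`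
acts bijectively. -/
lemma bij_sub_of_locNilp {R : Type u} [CommRing R] {N : Type v} [AddCommGroup N]
    [Module R N] (g i : R) (hg : Function.Bijective (fun x : N => g • x))
    (hi : ∀ y : N, ∃ n : ℕ, i ^ n • y = 0) :
    Function.Bijective (fun x : N => (g - i) • x) := by
  have hgu : IsUnit (algebraMap R (Module.End R N) g) := by
    rw [Module.End.isUnit_iff]
    convert hg using 1
    funext x; exact Module.algebraMap_end_apply _ _ _ _ _
  set U : Module.End R N := ↑hgu.unit⁻¹ with hU
  have hGU : ∀ z : N, g • (U z) = z := by
    intro z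
    have h1 : (algebraMap R (Module.End R N) g * ↑hgu.unit⁻¹) z = z := by
      rw [IsUnit.mul_val_inv]; rfl
    calc g • (U z) = (algebraMap R (Module.End R N) g) (U z) :=
          (Module.algebraMap_end_apply R R N g (U z)).symm
      _ = z := h1
  have key0 : ∀ x : N, (g - i) • x = 0 → x = 0 := by
    intro x hx
    have hgi : g • x = i • x := by
      have h := hx
      rw [sub_smul, sub_eq_zero] at h
      exact h
    have hk : ∀ k : ℕ, g ^ k • x = i ^ k • x := by
      intro k
      induction k with
      | zero => simp
      | succ k ih =>
          rw [pow_succ, pow_succ, mul_smul, mul_smul, smul_comm (g ^ k) g, ih,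
            smul_comm g (i ^ k), hgi]
    obtain ⟨n, hn⟩ := hi x
    have hgn : g ^ n • x = 0 := by rw [hk n, hn]
    have hgnu : IsUnit (algebraMap R (Module.End R N) (g ^ n)) := by
      rw [map_pow]; exact hgu.pow n
    have hbij := (Module.End.isUnit_iff _).mp hgnu
    apply hbij.injective
    rw [Module.algebraMap_end_apply, Module.algebraMap_end_apply, hgn, smul_zero]
  constructor
  · intro a b hab
    have : (g - i) • (a - b) = 0 := by
      simp only at hab
      rw [smul_sub, hab, sub_self]
    have := key0 _ this
    exact sub_eq_zero.mp this
  · intro y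
    obtain ⟨n, hn⟩ := hi y
    refine ⟨∑ k ∈ Finset.range n, (U ^ (k + 1)) (i ^ k • y), ?_⟩
    simp only
    rw [sub_smul, Finset.smul_sum, Finset.smul_sum, ← Finset.sum_sub_distrib]
    have hterm : ∀ k : ℕ, g • (U ^ (k + 1)) (i ^ k • y) - i • (U ^ (k + 1)) (i ^ k • y)
        = (U ^ k) (i ^ k • y) - (U ^ (k + 1)) (i ^ (k + 1) • y) := by
      intro k
      congr 1
      · have h1 : (U ^ (k + 1)) (i ^ k • y) = U ((U ^ k) (i ^ k • y)) := by
          rw [pow_succ']; rfl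
        rw [h1, hGU]
      · rw [← map_smul]
        congr 1
        rw [smul_smul, ← pow_succ']
    rw [Finset.sum_congr rfl (fun k _ => hterm k), Finset.sum_range_sub'
      (fun k => (U ^ k) (i ^ k • y))]
    simp [hn]

theorem localization_invariance_mod_I
    {R : Type u} [CommRing R] [IsNoetherianRing R] (I : Ideal R)
    (M : Type v) [AddCommGroup M] [Module R M]
    (htor : ∀ x : M, ∃ n : ℕ, ∀ a ∈ I ^ n, a • x = 0)
    (g g' : R) (hcong : g - g' ∈ I) :
    Function.Bijective (fun x : LocalizedModule (Submonoid.powers g) M => g' • x) ∧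
    Function.Bijective (fun x : LocalizedModule (Submonoid.powers g') M => g • x) ∧
    Nonempty (LocalizedModule (Submonoid.powers g) M ≃ₗ[R]
      LocalizedModule (Submonoid.powers g') M) := by
  -- bijectivity of the `g`-action on `M_g`, and of `g'` on `M_{g'}`
  have hact : ∀ (h : R), Function.Bijective
      (fun x : LocalizedModule (Submonoid.powers h) M => h • x) := by
    intro h
    have := IsLocalizedModule.map_units (LocalizedModule.mkLinearMap (Submonoid.powers h) M)
      ⟨h, Submonoid.mem_powers h⟩
    have := (Module.End.isUnit_iff _).mp this
    convert this using 1
    funext x; exact (Module.algebraMap_end_apply _ _ _ _ _).symm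
  -- local nilpotence of `g - g'` (and `g' - g`) on the localizations
  have htorL : ∀ (h c : R), c ∈ I → ∀ y : LocalizedModule (Submonoid.powers h) M,
      ∃ n : ℕ, c ^ n • y = 0 := by
    intro h c hc y
    induction y using LocalizedModule.induction_on with
    | h m s =>
      obtain ⟨n, hn⟩ := htor m
      refine ⟨n, ?_⟩
      rw [LocalizedModule.smul'_mk, hn _ (Ideal.pow_mem_pow hc n), LocalizedModule.zero_mk]
  have bij1 : Function.Bijective
      (fun x : LocalizedModule (Submonoid.powers g) M => g' • x) := by
    have := bij_sub_of_locNilp g (g - g') (hact g) (htorL g (g - g') hcong)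
    simpa [sub_sub_cancel] using this
  have hcong' : g' - g ∈ I := by
    have := I.neg_mem hcong
    simpa using this
  have bij2 : Function.Bijective
      (fun x : LocalizedModule (Submonoid.powers g') M => g • x) := by
    have := bij_sub_of_locNilp g' (g' - g) (hact g') (htorL g' (g' - g) hcong')
    simpa [sub_sub_cancel] using this
  -- build the isomorphism via the universal property
  have hunit : ∀ (a b : R), Function.Bijective
      (fun x : LocalizedModule (Submonoid.powers b) M => a • x) →
      ∀ s : Submonoid.powers a,
      IsUnit (algebraMap R (Module.End R (LocalizedModule (Submonoid.powers b) M)) s) := by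
    intro a b hbij s
    obtain ⟨k, hk⟩ := s.2
    have hau : IsUnit (algebraMap R (Module.End R (LocalizedModule (Submonoid.powers b) M)) a) := by
      rw [Module.End.isUnit_iff]
      convert hbij using 1
      funext x; exact Module.algebraMap_end_apply _ _ _ _ _
    have : (s : R) = a ^ k := hk.symm
    rw [this, map_pow]
    exact hau.pow k
  have hunits1 := hunit g g' bij2
  have hunits2 := hunit g' g bij1
  have hunits0 := hunit g g (hact g)
  have hunits0' := hunit g' g' (hact g')
  set φ := LocalizedModule.lift (Submonoid.powers g)
    (LocalizedModule.mkLinearMap (Submonoid.powers g') M) hunits1 with hφ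
  set ψ := LocalizedModule.lift (Submonoid.powers g')
    (LocalizedModule.mkLinearMap (Submonoid.powers g) M) hunits2 with hψ
  have h1 : ψ.comp φ = LinearMap.id := by
    have e1 := LocalizedModule.lift_unique (Submonoid.powers g)
      (LocalizedModule.mkLinearMap (Submonoid.powers g) M) hunits0 (ψ.comp φ)
      (by rw [LinearMap.comp_assoc, hφ, LocalizedModule.lift_comp, hψ,
            LocalizedModule.lift_comp])
    have e2 := LocalizedModule.lift_unique (Submonoid.powers g)
      (LocalizedModule.mkLinearMap (Submonoid.powers g) M) hunits0 LinearMap.id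
      (by rw [LinearMap.id_comp])
    rw [← e1, e2]
  have h2 : φ.comp ψ = LinearMap.id := by
    have e1 := LocalizedModule.lift_unique (Submonoid.powers g')
      (LocalizedModule.mkLinearMap (Submonoid.powers g') M) hunits0' (φ.comp ψ)
      (by rw [LinearMap.comp_assoc, hψ, LocalizedModule.lift_comp, hφ,
            LocalizedModule.lift_comp])
    have e2 := LocalizedModule.lift_unique (Submonoid.powers g')
      (LocalizedModule.mkLinearMap (Submonoid.powers g') M) hunits0' LinearMap.id
      (by rw [LinearMap.id_comp])
    rw [← e1, e2]
  exact ⟨bij1, bij2, ⟨LinearEquiv.ofLinear φ ψ h2 h1⟩⟩
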